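/- Let d ∈ ℕ, let Δ^d := {x ∈ ℝ^{d+1} : x_i ≥ 0 for all i, Σ_i x_i = 1} be the standard d-simplex with the Euclidean norm ‖·‖, and let b := (1/(d+1),…,1/(d+1)) be its barycentre. Define Ψ : [0,1] × Δ^d → ℝ^{d+1} by Ψ(s,x) := x − min(1, s/‖x−b‖)·(x−b) for x ≠ b and Ψ(s,b) := b. Then: (i) Ψ takes values in Δ^d; (ii) ‖x−b‖ ≤ √(d/(d+1)) < 1 for all x ∈ Δ^d, Ψ(0,x) = x and Ψ(1,x) = b for all x ∈ Δ^d; (iii) Ψ(s,b) = b for all s; (iv) Ψ(s,Ψ(t,x)) = Ψ(min(s+t,1),x) for all s,t ∈ [0,1] and x ∈ Δ^d; (v) there exists a constant C such that Ψ is Lipschitz with constant C with respect to the metric |s−s'| + ‖x−x'‖ on [0,1] × Δ^d; (vi) for every ε > 0 and every x ∈ Δ^d with ‖x−b‖ ≤ ε one has Ψ(min(1,ε),x) = b. -/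

import Mathlib

/-!
Statement 9: the barycentric deformation of the standard `d`-simplex.
`en` denotes the Euclidean norm on `Fin (d+1) → ℝ`.
-/

open scoped Classical

noncomputable section

/-- Euclidean norm on `Fin (d+1) → ℝ`. -/
def en {d : ℕ} (x : Fin (d + 1) → ℝ) : ℝ := Real.sqrt (∑ i, x i ^ 2)

/-- The barycentre of the standard `d`-simplex. -/
def bary (d : ℕ) : Fin (d + 1) → ℝ := fun _ => 1 / (d + 1)

/-- The deformation moving points of the simplex with unit speed towards the barycentre. -/
def Psi (d : ℕ) (s : ℝ) (x : Fin (d + 1) → ℝ) : Fin (d + 1) → ℝ :=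
  if x = bary d then bary d
  else x - min 1 (s / en (x - bary d)) • (x - bary d)

namespace StdSimplexAux

variable {d : ℕ}

lemma en_eq_norm (x : Fin (d + 1) → ℝ) :
    en x = ‖(WithLp.toLp 2 x : EuclideanSpace ℝ (Fin (d+1)))‖ := by
  rw [EuclideanSpace.norm_eq]; simp [en, sq_abs]

lemma en_nonneg (x : Fin (d+1) → ℝ) : 0 ≤ en x := by
  rw [en_eq_norm]; exact norm_nonneg _

lemma en_pos {x : Fin (d+1) → ℝ} (h : x ≠ 0) : 0 < en x := by
  rw [en_eq_norm]; exact norm_pos_iff.2 (by simpa using h)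

lemma en_smul (c : ℝ) (x : Fin (d+1) → ℝ) : en (c • x) = |c| * en x := by
  rw [en_eq_norm, en_eq_norm]
  rw [WithLp.toLp_smul]; exact norm_smul c (WithLp.toLp 2 x : EuclideanSpace ℝ (Fin (d+1)))

lemma en_add_le (x y : Fin (d+1) → ℝ) : en (x + y) ≤ en x + en y := by
  rw [en_eq_norm, en_eq_norm, en_eq_norm]
  rw [WithLp.toLp_add]; exact norm_add_le (WithLp.toLp 2 x : EuclideanSpace ℝ (Fin (d+1))) (WithLp.toLp 2 y)

lemma en_sub_le (x y z : Fin (d+1) → ℝ) : en (x - z) ≤ en (x - y) + en (y - z) := by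
  have := en_add_le (x - y) (y - z)
  rwa [sub_add_sub_cancel] at this

lemma en_neg (x : Fin (d+1) → ℝ) : en (-x) = en x := by
  rw [en_eq_norm, en_eq_norm]
  rw [WithLp.toLp_neg]; exact norm_neg (WithLp.toLp 2 x : EuclideanSpace ℝ (Fin (d+1)))

lemma abs_en_sub_en (x y : Fin (d+1) → ℝ) : |en x - en y| ≤ en (x - y) := by
  rw [en_eq_norm, en_eq_norm, en_eq_norm]
  rw [WithLp.toLp_sub]; exact abs_norm_sub_norm_le (WithLp.toLp 2 x : EuclideanSpace ℝ (Fin (d+1))) (WithLp.toLp 2 y)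

lemma bary_mem : bary d ∈ stdSimplex ℝ (Fin (d+1)) := by
  constructor
  · intro i; simp [bary]; positivity
  · simp [bary, Finset.sum_const]
    field_simp

lemma en_bound {x : Fin (d+1) → ℝ} (hx : x ∈ stdSimplex ℝ (Fin (d+1))) :
    en (x - bary d) ≤ Real.sqrt (d / (d + 1)) := by
  obtain ⟨h0, h1⟩ := hx
  unfold en
  apply Real.sqrt_le_sqrt
  have hd : ((d:ℝ)+1) ≠ 0 := by positivity
  have key : ∑ i, ((x - bary d) i) ^ 2 = (∑ i, x i ^ 2) - 1 / (d+1) := by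
    have : ∀ i, ((x - bary d) i) ^ 2 = x i ^2 - 2/(d+1) * x i + (1/(d+1))^2 := by
      intro i; simp [bary]; field_simp; ring
    rw [Finset.sum_congr rfl (fun i _ => this i)]
    rw [Finset.sum_add_distrib, Finset.sum_sub_distrib, ← Finset.mul_sum, h1,
      Finset.sum_const]
    simp
    field_simp
    ring
  rw [key]
  have hsq : ∑ i, x i ^ 2 ≤ 1 := by
    have := Finset.sum_sq_le_sq_sum_of_nonneg (s := Finset.univ) (f := x) (fun i _ => h0 i)
    rwa [h1, one_pow] at this
  have hd' : (0:ℝ) < (d:ℝ)+1 := by positivity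
  have : (d:ℝ)/(d+1) = 1 - 1/(d+1) := by field_simp; ring
  rw [this]
  linarith

lemma sqrt_lt_one : Real.sqrt ((d:ℝ) / (d + 1)) < 1 := by
  rw [Real.sqrt_lt' one_pos, one_pow, div_lt_one (by positivity)]
  linarith

lemma en_lt_one {x : Fin (d+1) → ℝ} (hx : x ∈ stdSimplex ℝ (Fin (d+1))) :
    en (x - bary d) < 1 :=
  lt_of_le_of_lt (en_bound hx) sqrt_lt_one

lemma Psi_bary (s : ℝ) : Psi d s (bary d) = bary d := by
  simp [Psi]

lemma Psi_zero (x : Fin (d+1) → ℝ) : Psi d 0 x = x := by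
  unfold Psi
  split_ifs with h
  · exact h.symm
  · simp [zero_div]

lemma Psi_eq_bary {s : ℝ} {x : Fin (d+1) → ℝ} (h : en (x - bary d) ≤ s) :
    Psi d s x = bary d := by
  unfold Psi
  split_ifs with hx
  · rfl
  · have hr : 0 < en (x - bary d) := en_pos (sub_ne_zero.2 hx)
    rw [min_eq_left ((one_le_div hr).2 h), one_smul, sub_sub_cancel]

lemma Psi_of_lt {s : ℝ} {x : Fin (d+1) → ℝ} (hx : x ≠ bary d) (hs : 0 ≤ s)
    (h : s < en (x - bary d)) :
    Psi d s x = bary d + ((en (x - bary d) - s) / en (x - bary d)) • (x - bary d) := by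
  have hr : 0 < en (x - bary d) := en_pos (sub_ne_zero.2 hx)
  unfold Psi
  rw [if_neg hx, min_eq_right (le_of_lt ((div_lt_one hr).2 h))]
  have hc : (en (x - bary d) - s) / en (x - bary d) = 1 - s / en (x - bary d) := by
    field_simp
  rw [hc, sub_smul, one_smul]
  abel

-- min is 1-Lipschitz
lemma abs_min_sub_min (c a b : ℝ) : |min c a - min c b| ≤ |a - b| := by
  rw [abs_sub_le_iff]
  constructor <;> rcases le_total c a with h | h <;> rcases le_total c b with h' | h' <;>
    simp [min_eq_left, min_eq_right, *] <;>
    cases abs_cases (a - b) <;> linarith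

lemma Psi_sub_bary_s {s s' : ℝ} {x : Fin (d+1) → ℝ} (hx : x ≠ bary d) :
    Psi d s x - Psi d s' x
      = (min 1 (s' / en (x - bary d)) - min 1 (s / en (x - bary d))) • (x - bary d) := by
  unfold Psi
  rw [if_neg hx, if_neg hx, sub_smul]
  abel

lemma min_one_div {r : ℝ} (hr : 0 < r) (s : ℝ) : min 1 (s / r) = min r s / r := by
  rcases le_total r s with h | h
  · rw [min_eq_left ((one_le_div hr).2 h), min_eq_left h, div_self hr.ne']
  · rw [min_eq_right ((div_le_one hr).2 h), min_eq_right h]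

lemma lip_s (s s' : ℝ) (x : Fin (d+1) → ℝ) :
    en (Psi d s x - Psi d s' x) ≤ |s - s'| := by
  by_cases hx : x = bary d
  · subst hx
    rw [Psi, if_pos rfl, Psi, if_pos rfl, sub_self]
    have h0 : en (0 : Fin (d+1) → ℝ) = 0 := by simp [en]
    rw [h0]
    exact abs_nonneg _
  · have hr : 0 < en (x - bary d) := en_pos (sub_ne_zero.2 hx)
    rw [Psi_sub_bary_s hx, en_smul, min_one_div hr, min_one_div hr, div_sub_div_same,
      abs_div, abs_of_pos hr, div_mul_cancel₀ _ hr.ne']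
    calc |min (en (x - bary d)) s' - min (en (x - bary d)) s| ≤ |s' - s| :=
          abs_min_sub_min _ _ _
      _ = |s - s'| := abs_sub_comm _ _

lemma Psi_eq_proj {s : ℝ} (hs : 0 < s) (x : Fin (d+1) → ℝ) :
    Psi d s x = x - (s / max s (en (x - bary d))) • (x - bary d) := by
  by_cases hx : x = bary d
  · rw [Psi, if_pos hx, hx, sub_self, smul_zero, sub_zero]
  · have hr : 0 < en (x - bary d) := en_pos (sub_ne_zero.2 hx)
    rw [Psi, if_neg hx]
    congr 1
    rcases le_total (en (x - bary d)) s with h | h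
    · rw [max_eq_left h, div_self hs.ne', min_eq_left ((one_le_div hr).2 h)]
    · rw [max_eq_right h, min_eq_right ((div_le_one hr).2 h)]

lemma lip_x {s : ℝ} (hs : 0 ≤ s) (x x' : Fin (d+1) → ℝ) :
    en (Psi d s x - Psi d s x') ≤ 3 * en (x - x') := by
  rcases hs.eq_or_lt with h | h
  · have hx : Psi d 0 x = x := by
      unfold Psi; split_ifs with hb
      · exact hb.symm
      · simp [zero_div]
    have hx' : Psi d 0 x' = x' := by
      unfold Psi; split_ifs with hb
      · exact hb.symm
      · simp [zero_div]
    rw [← h, hx, hx']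
    nlinarith [en_nonneg (x - x')]
  · set v := x - bary d with hv
    set v' := x' - bary d with hv'
    set M := max s (en v) with hM
    set M' := max s (en v') with hM'
    have hsM : s ≤ M := le_max_left _ _
    have hsM' : s ≤ M' := le_max_left _ _
    have hM0 : 0 < M := lt_of_lt_of_le h hsM
    have hM'0 : 0 < M' := lt_of_lt_of_le h hsM'
    have hvM : en v ≤ M := le_max_right _ _
    have hv'M : en v' ≤ M' := le_max_right _ _
    have hvv' : v - v' = x - x' := by rw [hv, hv']; abel
    have hMM' : |M - M'| ≤ en (x - x') := by
      have h1 : |M - M'| ≤ |en v - en v'| := by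
        rw [hM, hM', max_comm s (en v), max_comm s (en v')]
        exact abs_max_sub_max_le_abs _ _ _
      refine h1.trans ?_
      rw [← hvv']
      exact abs_en_sub_en _ _
    rw [Psi_eq_proj h, Psi_eq_proj h, ← hv, ← hv', ← hM, ← hM']
    have hsplit : (x - (s / M) • v) - (x' - (s / M') • v')
        = (x - x') - ((s / M) • (v - v') + (s / M - s / M') • v') := by
      module
    have t1 : en ((x - (s / M) • v) - (x' - (s / M') • v')) ≤
        en (x - x') + en ((s / M) • (v - v') + (s / M - s / M') • v') := by
      rw [hsplit]
      calc en ((x - x') - ((s / M) • (v - v') + (s / M - s / M') • v'))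
          ≤ en ((x - x') - 0) + en ((0:Fin (d+1) → ℝ) - ((s / M) • (v - v') + (s / M - s / M') • v')) :=
            en_sub_le _ _ _
        _ = en (x - x') + en ((s / M) • (v - v') + (s / M - s / M') • v') := by
            rw [sub_zero, zero_sub, en_neg]
    have t2 : en ((s / M) • (v - v') + (s / M - s / M') • v')
        ≤ en ((s / M) • (v - v')) + en ((s / M - s / M') • v') := by
      have := en_sub_le ((s / M) • (v - v')) 0 (-((s / M - s / M') • v'))
      simpa [sub_neg_eq_add, en_neg] using this
    have t3 : en ((s / M) • (v - v')) ≤ en (x - x') := by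
      rw [en_smul, hvv', abs_of_nonneg (by positivity)]
      have hle : s / M ≤ 1 := div_le_one_of_le₀ hsM hM0.le
      nlinarith [en_nonneg (x - x')]
    have t4 : en ((s / M - s / M') • v') ≤ en (x - x') := by
      rw [en_smul]
      have hdiff : s / M - s / M' = s * (M' - M) / (M * M') := by
        field_simp
      rw [hdiff, abs_div, abs_of_pos (mul_pos hM0 hM'0), abs_mul, abs_of_pos h]
      rw [div_mul_eq_mul_div, div_le_iff₀ (mul_pos hM0 hM'0)]
      rw [abs_sub_comm M' M]
      have k1 : s * |M - M'| ≤ M * en (x - x') :=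
        mul_le_mul hsM hMM' (abs_nonneg _) hM0.le
      have k2 : s * |M - M'| * en v' ≤ (M * en (x - x')) * M' :=
        mul_le_mul k1 hv'M (en_nonneg _) (mul_nonneg hM0.le (en_nonneg _))
      calc s * |M - M'| * en v' ≤ (M * en (x - x')) * M' := k2
        _ = en (x - x') * (M * M') := by ring
    calc en ((x - (s / M) • v) - (x' - (s / M') • v'))
        ≤ en (x - x') + (en ((s / M) • (v - v')) + en ((s / M - s / M') • v')) :=
          t1.trans (by linarith)
      _ ≤ 3 * en (x - x') := by linarith


end StdSimplexAux

open StdSimplexAux in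
theorem statement9 (d : ℕ) :
    -- (i) Ψ takes values in the simplex
    (∀ s ∈ Set.Icc (0 : ℝ) 1, ∀ x ∈ stdSimplex ℝ (Fin (d + 1)), Psi d s x ∈ stdSimplex ℝ (Fin (d + 1))) ∧
    -- (ii)
    (∀ x ∈ stdSimplex ℝ (Fin (d + 1)), en (x - bary d) ≤ Real.sqrt (d / (d + 1))) ∧
    (Real.sqrt (d / (d + 1)) < 1) ∧
    (∀ x ∈ stdSimplex ℝ (Fin (d + 1)), Psi d 0 x = x) ∧
    (∀ x ∈ stdSimplex ℝ (Fin (d + 1)), Psi d 1 x = bary d) ∧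
    -- (iii)
    (∀ s ∈ Set.Icc (0 : ℝ) 1, Psi d s (bary d) = bary d) ∧
    -- (iv)
    (∀ s ∈ Set.Icc (0 : ℝ) 1, ∀ t ∈ Set.Icc (0 : ℝ) 1, ∀ x ∈ stdSimplex ℝ (Fin (d + 1)),
      Psi d s (Psi d t x) = Psi d (min (s + t) 1) x) ∧
    -- (v) Lipschitz with respect to the sum metric on [0,1] × Δ^d
    (∃ C : ℝ, ∀ s ∈ Set.Icc (0 : ℝ) 1, ∀ s' ∈ Set.Icc (0 : ℝ) 1,
      ∀ x ∈ stdSimplex ℝ (Fin (d + 1)), ∀ x' ∈ stdSimplex ℝ (Fin (d + 1)),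
        en (Psi d s x - Psi d s' x') ≤ C * (|s - s'| + en (x - x'))) ∧
    -- (vi)
    (∀ ε > (0 : ℝ), ∀ x ∈ stdSimplex ℝ (Fin (d + 1)),
      en (x - bary d) ≤ ε → Psi d (min 1 ε) x = bary d) := by

  refine ⟨?_, ?_, sqrt_lt_one, ?_, ?_, ?_, ?_, ?_, ?_⟩
  · -- (i)
    intro s hs x hx
    by_cases hxb : x = bary d
    · rw [Psi, if_pos hxb]; exact bary_mem
    · have hr0 : 0 < en (x - bary d) := en_pos (sub_ne_zero.2 hxb)
      set c := min 1 (s / en (x - bary d)) with hc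
      have hc0 : 0 ≤ c := le_min zero_le_one (div_nonneg hs.1 (en_nonneg _))
      have hc1 : c ≤ 1 := min_le_left _ _
      have hrw : Psi d s x = (1 - c) • x + c • bary d := by
        rw [Psi, if_neg hxb, ← hc]; module
      rw [hrw]
      exact convex_stdSimplex ℝ (Fin (d+1)) hx bary_mem (by linarith) hc0 (by ring)
  · -- (ii) bound
    intro x hx; exact en_bound hx
  · -- (ii) Psi 0
    intro x _; exact Psi_zero x
  · -- (ii) Psi 1
    intro x hx; exact Psi_eq_bary (en_lt_one hx).le
  · -- (iii)
    intro s _; exact Psi_bary s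
  · -- (iv)
    intro s hs t ht x hx
    have hr1 : en (x - bary d) < 1 := en_lt_one hx
    by_cases hxb : x = bary d
    · subst hxb; simp only [Psi_bary]
    · have hr0 : 0 < en (x - bary d) := en_pos (sub_ne_zero.2 hxb)
      set r := en (x - bary d) with hrdef
      by_cases htr : r ≤ t
      · rw [Psi_eq_bary htr, Psi_bary,
          Psi_eq_bary (le_min (by linarith [hs.1]) hr1.le)]
      · push_neg at htr
        have hy := Psi_of_lt hxb ht.1 htr
        set y := Psi d t x with hydef
        have hyb : y - bary d = ((r - t)/r) • (x - bary d) := by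
          rw [hy, add_sub_cancel_left]
        have hcpos : 0 < (r - t)/r := div_pos (by linarith) hr0
        have hyen : en (y - bary d) = r - t := by
          rw [hyb, en_smul, abs_of_pos hcpos, div_mul_cancel₀ _ hr0.ne']
        have hyne : y ≠ bary d := by
          intro hcon
          have h0 : en (y - bary d) = 0 := by rw [hcon, sub_self]; simp [en]
          rw [hyen] at h0; linarith
        by_cases hsr : r - t ≤ s
        · rw [Psi_eq_bary (by rw [hyen]; exact hsr),
            Psi_eq_bary (le_min (by linarith [hs.1, ht.1]) hr1.le)]
        · push_neg at hsr
          have hlhs := Psi_of_lt hyne hs.1 (by rw [hyen]; exact hsr)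
          have hmin : min (s + t) 1 = s + t := min_eq_left (by linarith)
          rw [hlhs, hyen, hyb, hmin,
            Psi_of_lt hxb (by linarith [hs.1, ht.1] : (0:ℝ) ≤ s + t) (by linarith : s + t < r),
            smul_smul]
          have hrt : r - t ≠ 0 := by linarith
          have hco : (r - t - s) / (r - t) * ((r - t) / r) = (r - (s + t)) / r := by
            field_simp
            ring
          rw [hco]
  · -- (v)
    refine ⟨3, fun s hs s' hs' x _ x' _ => ?_⟩
    have h1 : en (Psi d s x - Psi d s' x') ≤
        en (Psi d s x - Psi d s' x) + en (Psi d s' x - Psi d s' x') := en_sub_le _ _ _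
    have h2 := lip_s (d := d) s s' x
    have h3 := lip_x (d := d) hs'.1 x x'
    have h4 : 0 ≤ |s - s'| := abs_nonneg _
    have h5 : 0 ≤ en (x - x') := en_nonneg _
    linarith
  · -- (vi)
    intro ε hε x hx hεx
    exact Psi_eq_bary (le_min (en_lt_one hx).le hεx)

end
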